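/- Let p : (0,1) × [0,∞) → ℝ satisfy 0 < δ ≤ p(x,t) ≤ 1/δ for a.e. x and all t ≥ T₀, suppose σ : (0,∞) → ℝ is Lipschitz on [δ, 1/δ] with constant C₀, and suppose for a.e. x and all t ≥ s ≥ T₀: p(x,t) − p(x,s) = −∫ₛᵗ (σ(p(x,τ)) − ∫₀¹ σ(p(y,τ)) dy) dτ with ∫_{T₀}^∞ ‖p_t(·,t)‖²_{L²} dt < ∞. Then ‖p_t(·,t)‖²_{L²} is Lipschitz in t on [T₀,∞), and consequently ‖p_t(·,t)‖_{L²} → 0 as t → ∞. -/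

import Mathlib

open MeasureTheory Set

lemma decay_aux (F : ℝ → ℝ) (T₀ : ℝ) (K : NNReal)
    (hL : LipschitzOnWith K F (Set.Ici T₀)) (hF0 : ∀ t, 0 ≤ F t)
    (hint : IntegrableOn F (Set.Ici T₀)) :
    Filter.Tendsto F Filter.atTop (nhds 0) := by
  obtain ⟨K', hK'⟩ : ∃ K' : ℝ, ((K : ℝ) + 1) = K' := ⟨_, rfl⟩
  have hK'pos : 0 < K' := by rw [← hK']; positivity
  -- tail integral tends to 0
  have htail : Filter.Tendsto (fun t => ∫ τ in Set.Ioi t, F τ) Filter.atTop (nhds 0) := by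
    have h1 : Filter.Tendsto (fun t => ∫ τ in T₀..t, F τ) Filter.atTop
        (nhds (∫ τ in Set.Ioi T₀, F τ)) :=
      MeasureTheory.intervalIntegral_tendsto_integral_Ioi T₀
        (hint.mono_set Set.Ioi_subset_Ici_self) Filter.tendsto_id
    have h2 : ∀ᶠ t in Filter.atTop, (∫ τ in Set.Ioi t, F τ)
        = (∫ τ in Set.Ioi T₀, F τ) - ∫ τ in T₀..t, F τ := by
      filter_upwards [Filter.eventually_ge_atTop T₀] with t ht
      rw [intervalIntegral.integral_of_le ht]
      have hsplit : Set.Ioi T₀ = Set.Ioc T₀ t ∪ Set.Ioi t := by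
        rw [Set.Ioc_union_Ioi_eq_Ioi ht]
      have hIoc : IntegrableOn F (Set.Ioc T₀ t) :=
        hint.mono_set (Set.Ioc_subset_Icc_self.trans Set.Icc_subset_Ici_self)
      have hIoi : IntegrableOn F (Set.Ioi t) :=
        hint.mono_set (fun x hx => le_trans ht (le_of_lt hx))
      rw [hsplit, setIntegral_union (Set.Ioc_disjoint_Ioi le_rfl) measurableSet_Ioi hIoc hIoi]
      ring
    have h3 := Filter.Tendsto.sub
      (tendsto_const_nhds (x := ∫ τ in Set.Ioi T₀, F τ) (f := Filter.atTop (α := ℝ))) h1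
    rw [sub_self] at h3
    exact Filter.Tendsto.congr' (by filter_upwards [h2] with t ht; exact ht.symm) h3
  -- main bound: F t ^ 2 ≤ 2 K' * tail t for t ≥ T₀
  have hbound : ∀ t, T₀ ≤ t → F t ^ 2 ≤ 2 * K' * ∫ τ in Set.Ioi t, F τ := by
    intro t ht
    obtain ⟨a, ha⟩ : ∃ a, F t = a := ⟨_, rfl⟩
    rw [ha]
    have ha0 : 0 ≤ a := ha ▸ hF0 t
    obtain ⟨r, hr⟩ : ∃ r, a / K' = r := ⟨_, rfl⟩
    have hr0 : 0 ≤ r := hr ▸ div_nonneg ha0 hK'pos.le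
    have hlow : ∀ τ ∈ Set.Icc t (t + r), a - K' * (τ - t) ≤ F τ := by
      intro τ hτ
      have hτT : τ ∈ Set.Ici T₀ := le_trans ht hτ.1
      have := hL.dist_le_mul τ hτT t (le_trans ht le_rfl)
      rw [Real.dist_eq, Real.dist_eq] at this
      have h1 : |F τ - F t| ≤ K' * |τ - t| := by
        refine this.trans ?_
        apply mul_le_mul_of_nonneg_right _ (abs_nonneg _)
        rw [← hK']; simp
      have h2 : |τ - t| = τ - t := abs_of_nonneg (by linarith [hτ.1])
      rw [h2] at h1
      have h3 := (abs_le.mp h1).1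
      rw [ha] at h3
      linarith
    have hIcc : IntegrableOn F (Set.Icc t (t + r)) :=
      hint.mono_set (fun x hx => le_trans ht hx.1)
    have hcomp : ∫ τ in t..(t + r), (a - K' * (τ - t)) ≤ ∫ τ in t..(t + r), F τ := by
      apply intervalIntegral.integral_mono_on (by linarith)
      · exact (by continuity : Continuous fun τ : ℝ => a - K' * (τ - t)).intervalIntegrable _ _
      · exact (intervalIntegrable_iff_integrableOn_Ioc_of_le (by linarith)).mpr
          (hIcc.mono_set Set.Ioc_subset_Icc_self)
      · exact hlow
    have hval : ∫ τ in t..(t + r), (a - K' * (τ - t)) = a * r / 2 := by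
      have : ∫ τ in t..(t + r), (a - K' * (τ - t))
          = (∫ τ in t..(t + r), (a + K' * t)) - K' * ∫ τ in t..(t + r), τ := by
        rw [← intervalIntegral.integral_const_mul, ← intervalIntegral.integral_sub]
        · congr 1; ext τ; ring
        · exact intervalIntegrable_const
        · exact (continuous_const.mul continuous_id).intervalIntegrable _ _
      rw [this, intervalIntegral.integral_const, integral_id]
      have hra : K' * r = a := by rw [← hr]; field_simp
      simp only [smul_eq_mul]
      linear_combination (- r / 2) * hra
    have htail_ge : ∫ τ in t..(t + r), F τ ≤ ∫ τ in Set.Ioi t, F τ := by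
      rw [intervalIntegral.integral_of_le (by linarith)]
      apply setIntegral_mono_set
      · exact hint.mono_set (fun x hx => le_trans ht (le_of_lt hx))
      · exact Filter.Eventually.of_forall (fun x => hF0 x)
      · exact Filter.Eventually.of_forall Set.Ioc_subset_Ioi_self
    have hmid : a * r / 2 ≤ ∫ τ in Set.Ioi t, F τ := by
      calc a * r / 2 = ∫ τ in t..(t + r), (a - K' * (τ - t)) := hval.symm
        _ ≤ ∫ τ in t..(t + r), F τ := hcomp
        _ ≤ _ := htail_ge
    have hra : K' * r = a := by rw [← hr]; field_simp
    have hfinal : a ^ 2 = 2 * K' * (a * r / 2) := by linear_combination (-a) * hra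
    rw [hfinal]
    exact mul_le_mul_of_nonneg_left hmid (by positivity)
  -- conclude by squeeze
  have hsq : Filter.Tendsto (fun t => Real.sqrt (2 * K' * ∫ τ in Set.Ioi t, F τ))
      Filter.atTop (nhds 0) := by
    have h0 := htail.const_mul (2 * K')
    rw [mul_zero] at h0
    have := (Real.continuous_sqrt.tendsto 0).comp h0
    simpa [Real.sqrt_zero, Function.comp_def] using this
  apply squeeze_zero' (Filter.eventually_ge_atTop T₀ |>.mono fun t ht => hF0 t)
  · filter_upwards [Filter.eventually_ge_atTop T₀] with t ht
    have := hbound t ht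
    calc F t = Real.sqrt ((F t) ^ 2) := by rw [Real.sqrt_sq (hF0 t)]
      _ ≤ Real.sqrt (2 * K' * ∫ τ in Set.Ioi t, F τ) := Real.sqrt_le_sqrt this
  · exact hsq


/-- Decay of the time derivative: if `δ ≤ p(x,t) ≤ 1/δ` for a.e. `x` and all `t ≥ T₀`, `σ` is
Lipschitz on `[δ,1/δ]`, `p` satisfies the integrated equation
`p(x,t) − p(x,s) = −∫ₛᵗ (σ(p(x,τ)) − ∫₀¹ σ(p(y,τ)) dy) dτ`, and
`∫_{T₀}^∞ ‖p_t(·,t)‖²_{L²} dt < ∞`, then `t ↦ ‖p_t(·,t)‖²_{L²}` is Lipschitz on `[T₀,∞)` and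
`‖p_t(·,t)‖_{L²} → 0` as `t → ∞`.  Here `p_t(x,t) = −σ(p(x,t)) + ∫₀¹ σ(p(y,t)) dy`. -/
theorem stmt19 (σ : ℝ → ℝ) (p : ℝ → ℝ → ℝ) (δ T₀ : ℝ) (hδ : 0 < δ) (hδ1 : δ ≤ 1)
    (C₀ : NNReal) (hσ : LipschitzOnWith C₀ σ (Set.Icc δ (1/δ)))
    (hmeas : Measurable (Function.uncurry p))
    (hbdd : ∀ t : ℝ, T₀ ≤ t → ∀ᵐ x ∂(volume.restrict (Set.Ioo (0:ℝ) 1)),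
      δ ≤ p x t ∧ p x t ≤ 1/δ)
    (heq : ∀ s t : ℝ, T₀ ≤ s → s ≤ t →
      ∀ᵐ x ∂(volume.restrict (Set.Ioo (0:ℝ) 1)),
        p x t - p x s =
          -∫ τ in s..t, (σ (p x τ) - ∫ y in Set.Ioo (0:ℝ) 1, σ (p y τ)))
    (hfin : IntegrableOn
      (fun t => ∫ x in Set.Ioo (0:ℝ) 1,
        (-σ (p x t) + ∫ y in Set.Ioo (0:ℝ) 1, σ (p y t)) ^ 2)
      (Set.Ici T₀)) :
    (∃ K : NNReal, LipschitzOnWith K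
      (fun t => ∫ x in Set.Ioo (0:ℝ) 1,
        (-σ (p x t) + ∫ y in Set.Ioo (0:ℝ) 1, σ (p y t)) ^ 2)
      (Set.Ici T₀)) ∧
    Filter.Tendsto
      (fun t => ∫ x in Set.Ioo (0:ℝ) 1,
        (-σ (p x t) + ∫ y in Set.Ioo (0:ℝ) 1, σ (p y t)) ^ 2)
      Filter.atTop (nhds 0) := by
  classical
  set F : ℝ → ℝ := fun t => ∫ x in Set.Ioo (0:ℝ) 1,
      (-σ (p x t) + ∫ y in Set.Ioo (0:ℝ) 1, σ (p y t)) ^ 2 with hF_def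
  set μ : Measure ℝ := volume.restrict (Set.Ioo (0:ℝ) 1) with hμ
  have hμuniv : μ Set.univ = 1 := by
    rw [hμ, Measure.restrict_apply_univ, Real.volume_Ioo]
    norm_num
  haveI : IsFiniteMeasure μ := ⟨by rw [hμuniv]; exact ENNReal.one_lt_top⟩
  obtain ⟨g, hg_lip, hg_eq⟩ := hσ.extend_real
  have hδδ : δ ≤ 1/δ := by
    rw [le_div_iff₀ hδ]; nlinarith
  have hsub : (0:ℝ) ≤ 1/δ - δ := by linarith
  set M : ℝ := |g δ| + C₀ * (1/δ - δ) with hM_def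
  have hM0 : 0 ≤ M := by positivity
  have hMg : ∀ z ∈ Set.Icc δ (1/δ), |g z| ≤ M := by
    intro z hz
    have h1 : |g z - g δ| ≤ (C₀:ℝ) * |z - δ| := by
      have := hg_lip.dist_le_mul z δ
      rwa [Real.dist_eq, Real.dist_eq] at this
    have h2 : |z - δ| ≤ 1/δ - δ := by
      rw [abs_of_nonneg (by linarith [hz.1])]; linarith [hz.2]
    have h3 : |g z - g δ| ≤ (C₀:ℝ) * (1/δ - δ) :=
      h1.trans (mul_le_mul_of_nonneg_left h2 C₀.coe_nonneg)
    calc |g z| = |g δ + (g z - g δ)| := by ring_nf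
      _ ≤ |g δ| + |g z - g δ| := abs_add_le _ _
      _ ≤ M := by rw [hM_def]; linarith
  have hpm : ∀ t, Measurable fun x => p x t :=
    fun t => hmeas.comp (measurable_id.prodMk measurable_const)
  have hpm' : ∀ x, Measurable fun t => p x t :=
    fun x => hmeas.comp (measurable_const.prodMk measurable_id)
  have hgm : Measurable g := hg_lip.continuous.measurable
  set I : ℝ → ℝ := fun t => ∫ x, g (p x t) ∂μ with hI_def
  have hIm : Measurable I := by
    have hsm : StronglyMeasurable fun q : ℝ × ℝ => g (p q.2 q.1) :=
      (hgm.comp (hmeas.comp measurable_swap)).stronglyMeasurable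
    exact hsm.integral_prod_right'.measurable
  have hbdd' : ∀ t, T₀ ≤ t → ∀ᵐ x ∂μ, p x t ∈ Set.Icc δ (1/δ) :=
    fun t ht => (hbdd t ht).mono fun x h => ⟨h.1, h.2⟩
  have hae : ∀ t, T₀ ≤ t → ∀ᵐ x ∂μ, σ (p x t) = g (p x t) ∧ |g (p x t)| ≤ M := by
    intro t ht
    filter_upwards [hbdd' t ht] with x hx
    exact ⟨hg_eq hx, hMg _ hx⟩
  have hgint : ∀ t, T₀ ≤ t → Integrable (fun x => g (p x t)) μ := by
    intro t ht
    refine ⟨(hgm.comp (hpm t)).aestronglyMeasurable, ?_⟩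
    apply HasFiniteIntegral.of_bounded (C := M)
    filter_upwards [hae t ht] with x hx
    simpa [Real.norm_eq_abs] using hx.2
  have hIeq : ∀ t, T₀ ≤ t → (∫ y in Set.Ioo (0:ℝ) 1, σ (p y t)) = I t := by
    intro t ht
    exact integral_congr_ae ((hae t ht).mono fun x hx => hx.1)
  have hIbd : ∀ t, T₀ ≤ t → |I t| ≤ M := by
    intro t ht
    have h1 : |I t| ≤ ∫ x, |g (p x t)| ∂μ := by
      simpa [Real.norm_eq_abs] using norm_integral_le_integral_norm (fun x => g (p x t)) (μ := μ)
    refine h1.trans ?_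
    calc ∫ x, |g (p x t)| ∂μ ≤ ∫ _x, M ∂μ :=
          integral_mono_ae (hgint t ht).abs (integrable_const M)
            ((hae t ht).mono fun x hx => hx.2)
      _ = M := by simp [measureReal_def, hμuniv]
  set H : ℝ → ℝ → ℝ := fun t x => -g (p x t) + I t with hH_def
  have hHbd : ∀ t, T₀ ≤ t → ∀ᵐ x ∂μ, |H t x| ≤ 2 * M := by
    intro t ht
    filter_upwards [hae t ht] with x hx
    calc |H t x| ≤ |(-g (p x t))| + |I t| := abs_add_le _ _
      _ ≤ M + M := add_le_add (by rw [abs_neg]; exact hx.2) (hIbd t ht)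
      _ = 2 * M := by ring
  have hHm : ∀ t, Measurable fun x => H t x :=
    fun t => ((hgm.comp (hpm t)).neg.add_const _)
  have hH2int : ∀ t, T₀ ≤ t → Integrable (fun x => H t x ^ 2) μ := by
    intro t ht
    refine ⟨((hHm t).pow_const 2).aestronglyMeasurable, ?_⟩
    apply HasFiniteIntegral.of_bounded (C := (2 * M) ^ 2)
    filter_upwards [hHbd t ht] with x hx
    rw [Real.norm_eq_abs, abs_pow]
    exact pow_le_pow_left₀ (abs_nonneg _) hx 2
  have hFeq : ∀ t, T₀ ≤ t → F t = ∫ x, H t x ^ 2 ∂μ := by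
    intro t ht
    rw [hF_def]
    apply integral_congr_ae
    filter_upwards [hae t ht] with x hx
    rw [hIeq t ht, hx.1, hH_def]
  -- a.e. bound on |p x t - p x s|
  have hp_diff : ∀ s t, T₀ ≤ s → s ≤ t →
      ∀ᵐ x ∂μ, |p x t - p x s| ≤ 2 * M * (t - s) := by
    intro s t hs hst
    set ν : Measure ℝ := volume.restrict (Set.Ioc s t) with hν
    have hQ : ∀ᵐ x ∂μ, ∀ᵐ τ ∂ν, p x τ ∈ Set.Icc δ (1/δ) := by
      set S : Set (ℝ × ℝ) := {q | p q.1 q.2 ∉ Set.Icc δ (1/δ)} with hS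
      have hSm : MeasurableSet S := (hmeas measurableSet_Icc).compl
      have hprod : (μ.prod ν) S = 0 := by
        rw [Measure.prod_apply_symm hSm]
        have h0 : ∀ᵐ τ ∂ν, μ ((fun x => (x, τ)) ⁻¹' S) = 0 := by
          rw [hν, ae_restrict_iff' measurableSet_Ioc]
          apply Filter.Eventually.of_forall
          intro τ hτ
          have hτT : T₀ ≤ τ := le_trans hs hτ.1.le
          have h1 := ae_iff.mp (hbdd' τ hτT)
          convert h1 using 2
          rfl
        calc (∫⁻ τ, μ ((fun x => (x, τ)) ⁻¹' S) ∂ν) = ∫⁻ _τ, 0 ∂ν := lintegral_congr_ae h0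
          _ = 0 := lintegral_zero
      have h2 := (Measure.measure_prod_null hSm).mp hprod
      filter_upwards [h2] with x hx
      rw [ae_iff]
      convert hx using 2
      rfl
      rfl
    filter_upwards [hQ, heq s t hs hst] with x hQx hxeq
    have hQx' : ∀ᵐ τ ∂(volume : Measure ℝ), τ ∈ Set.Ioc s t → p x τ ∈ Set.Icc δ (1/δ) := by
      rw [hν, ae_restrict_iff' measurableSet_Ioc] at hQx
      exact hQx
    have hcongr : (∫ τ in s..t, (σ (p x τ) - ∫ y in Set.Ioo (0:ℝ) 1, σ (p y τ)))
        = ∫ τ in s..t, (g (p x τ) - I τ) := by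
      apply intervalIntegral.integral_congr_ae
      filter_upwards [hQx'] with τ hτ
      intro hmem
      rw [Set.uIoc_of_le hst] at hmem
      have hτT : T₀ ≤ τ := le_trans hs hmem.1.le
      rw [hIeq τ hτT, hg_eq (hτ hmem)]
    have hφm : Measurable fun τ => g (p x τ) - I τ :=
      (hgm.comp (hpm' x)).sub hIm
    have hφbd : ∀ᵐ τ ∂ν, |g (p x τ) - I τ| ≤ 2 * M := by
      rw [hν, ae_restrict_iff' measurableSet_Ioc]
      filter_upwards [hQx'] with τ h1
      intro hmem
      have hτT : T₀ ≤ τ := le_trans hs hmem.1.le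
      calc |g (p x τ) - I τ| ≤ |g (p x τ)| + |I τ| := abs_sub _ _
        _ ≤ M + M := add_le_add (hMg _ (h1 hmem)) (hIbd τ hτT)
        _ = 2 * M := by ring
    have hφint : Integrable (fun τ => g (p x τ) - I τ) ν := by
      refine ⟨hφm.aestronglyMeasurable, ?_⟩
      apply HasFiniteIntegral.of_bounded (C := 2 * M)
      filter_upwards [hφbd] with τ h
      simpa [Real.norm_eq_abs] using h
    rw [hxeq, hcongr, abs_neg, intervalIntegral.integral_of_le hst]
    have habs : |∫ τ in Set.Ioc s t, (g (p x τ) - I τ)| ≤ ∫ τ in Set.Ioc s t, |g (p x τ) - I τ| := by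
      simpa [Real.norm_eq_abs] using
        norm_integral_le_integral_norm (fun τ => g (p x τ) - I τ) (μ := ν)
    refine habs.trans ?_
    calc (∫ τ in Set.Ioc s t, |g (p x τ) - I τ|)
        ≤ ∫ _τ in Set.Ioc s t, (2 * M) := integral_mono_ae hφint.abs (integrable_const _) hφbd
      _ = 2 * M * (t - s) := by
          rw [setIntegral_const, Real.volume_real_Ioc_of_le hst, smul_eq_mul]
          ring
  -- I is Lipschitz-type bounded
  have hI_diff : ∀ s t, T₀ ≤ s → s ≤ t → |I t - I s| ≤ (C₀:ℝ) * (2 * M * (t - s)) := by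
    intro s t hs hst
    have ht := hs.trans hst
    have h1 : I t - I s = ∫ x, (g (p x t) - g (p x s)) ∂μ :=
      (integral_sub (hgint t ht) (hgint s hs)).symm
    rw [h1]
    have habs : |∫ x, (g (p x t) - g (p x s)) ∂μ| ≤ ∫ x, |g (p x t) - g (p x s)| ∂μ := by
      simpa [Real.norm_eq_abs] using
        norm_integral_le_integral_norm (fun x => g (p x t) - g (p x s)) (μ := μ)
    refine habs.trans ?_
    calc (∫ x, |g (p x t) - g (p x s)| ∂μ)
        ≤ ∫ _x, ((C₀:ℝ) * (2 * M * (t - s))) ∂μ := by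
          apply integral_mono_ae ((hgint t ht).sub (hgint s hs)).abs (integrable_const _)
          filter_upwards [hp_diff s t hs hst] with x hx
          have h2 : |g (p x t) - g (p x s)| ≤ (C₀:ℝ) * |p x t - p x s| := by
            have := hg_lip.dist_le_mul (p x t) (p x s)
            rwa [Real.dist_eq, Real.dist_eq] at this
          exact h2.trans (mul_le_mul_of_nonneg_left hx C₀.coe_nonneg)
      _ = (C₀:ℝ) * (2 * M * (t - s)) := by simp [measureReal_def, hμuniv]
  -- key Lipschitz estimate for F
  have key : ∀ s t, T₀ ≤ s → s ≤ t → |F t - F s| ≤ 16 * (C₀:ℝ) * M ^ 2 * (t - s) := by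
    intro s t hs hst
    have ht := hs.trans hst
    rw [hFeq t ht, hFeq s hs, ← integral_sub (hH2int t ht) (hH2int s hs)]
    have habs : |∫ x, (H t x ^ 2 - H s x ^ 2) ∂μ| ≤ ∫ x, |H t x ^ 2 - H s x ^ 2| ∂μ := by
      simpa [Real.norm_eq_abs] using
        norm_integral_le_integral_norm (fun x => H t x ^ 2 - H s x ^ 2) (μ := μ)
    refine habs.trans ?_
    calc (∫ x, |H t x ^ 2 - H s x ^ 2| ∂μ)
        ≤ ∫ _x, (16 * (C₀:ℝ) * M ^ 2 * (t - s)) ∂μ := by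
          apply integral_mono_ae ((hH2int t ht).sub (hH2int s hs)).abs (integrable_const _)
          filter_upwards [hHbd t ht, hHbd s hs, hp_diff s t hs hst] with x hbt hbs hpd
          have hdiff : |H t x - H s x| ≤ 4 * (C₀:ℝ) * M * (t - s) := by
            have h1 : |g (p x t) - g (p x s)| ≤ (C₀:ℝ) * |p x t - p x s| := by
              have := hg_lip.dist_le_mul (p x t) (p x s)
              rwa [Real.dist_eq, Real.dist_eq] at this
            have h2 : |g (p x t) - g (p x s)| ≤ (C₀:ℝ) * (2 * M * (t - s)) :=
              h1.trans (mul_le_mul_of_nonneg_left hpd C₀.coe_nonneg)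
            have h3 := hI_diff s t hs hst
            calc |H t x - H s x|
                = |(I t - I s) - (g (p x t) - g (p x s))| := by rw [hH_def]; ring_nf
              _ ≤ |I t - I s| + |g (p x t) - g (p x s)| := abs_sub _ _
              _ ≤ (C₀:ℝ) * (2 * M * (t - s)) + (C₀:ℝ) * (2 * M * (t - s)) := add_le_add h3 h2
              _ = 4 * (C₀:ℝ) * M * (t - s) := by ring
          have hsum : |H t x + H s x| ≤ 4 * M := by
            calc |H t x + H s x| ≤ |H t x| + |H s x| := abs_add_le _ _
              _ ≤ 2 * M + 2 * M := add_le_add hbt hbs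
              _ = 4 * M := by ring
          calc |H t x ^ 2 - H s x ^ 2| = |H t x - H s x| * |H t x + H s x| := by
                rw [← abs_mul]; ring_nf
            _ ≤ (4 * (C₀:ℝ) * M * (t - s)) * (4 * M) := by
                apply mul_le_mul hdiff hsum (abs_nonneg _)
                have hts : 0 ≤ t - s := by linarith
                positivity
            _ = 16 * (C₀:ℝ) * M ^ 2 * (t - s) := by ring
      _ = 16 * (C₀:ℝ) * M ^ 2 * (t - s) := by simp [measureReal_def, hμuniv]
  set Kc : ℝ := 16 * (C₀:ℝ) * M ^ 2 with hKc_def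
  have hKc0 : 0 ≤ Kc := by positivity
  have hlip : LipschitzOnWith (Real.toNNReal Kc) F (Set.Ici T₀) := by
    rw [lipschitzOnWith_iff_dist_le_mul]
    intro t ht s hs
    rw [Real.dist_eq, Real.dist_eq, Real.coe_toNNReal _ hKc0]
    rcases le_total s t with h | h
    · calc |F t - F s| ≤ Kc * (t - s) := key s t hs h
        _ = Kc * |t - s| := by rw [abs_of_nonneg (by linarith)]
    · rw [abs_sub_comm, abs_sub_comm t s]
      calc |F s - F t| ≤ Kc * (s - t) := key t s ht h
        _ = Kc * |s - t| := by rw [abs_of_nonneg (by linarith)]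
  have hF0 : ∀ t, 0 ≤ F t := fun t => integral_nonneg fun x => sq_nonneg _
  exact ⟨⟨_, hlip⟩, decay_aux F T₀ (Real.toNNReal Kc) hlip hF0 hfin⟩
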